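/- arXiv:1905.09577 — 5 statements merged into one kernel-verified Lean document; each statement's English description precedes it below -/
import Mathlib

section
/- Let f₁ : X → Y, g₁ : X → X', g₂ : Y → Y', f₂ : X' → Y' be continuous surjective maps of topological spaces such that g₂ ∘ f₁ = f₂ ∘ g₁. If f₁ and g₂ are d-open, then f₂ is d-open. -/
/-- A map `f` is d-open if the image of every open set is contained in the
interior of its closure. -/
def DOpen {X Y : Type*} [TopologicalSpace X] [TopologicalSpace Y] (f : X → Y) : Prop :=
  ∀ O : Set X, IsOpen O → f '' O ⊆ interior (closure (f '' O))

/-- Commuting square lemma: if `g₂ ∘ f₁ = f₂ ∘ g₁` with all maps continuous surjective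
and `f₁`, `g₂` d-open, then `f₂` is d-open. -/
theorem dopen_of_commuting_square {X Y X' Y' : Type*} [TopologicalSpace X]
    [TopologicalSpace Y] [TopologicalSpace X'] [TopologicalSpace Y']
    (f₁ : X → Y) (g₁ : X → X') (g₂ : Y → Y') (f₂ : X' → Y')
    (hf₁c : Continuous f₁) (hg₁c : Continuous g₁) (hg₂c : Continuous g₂)
    (hf₂c : Continuous f₂)
    (hf₁s : Function.Surjective f₁) (hg₁s : Function.Surjective g₁)
    (hg₂s : Function.Surjective g₂) (hf₂s : Function.Surjective f₂)
    (hcomm : g₂ ∘ f₁ = f₂ ∘ g₁)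
    (hf₁ : DOpen f₁) (hg₂ : DOpen g₂) : DOpen f₂ := by
  intro O' hO' y' hy'
  obtain ⟨x', hx'O, rfl⟩ := hy'
  obtain ⟨x, rfl⟩ := hg₁s x'
  set U : Set X := g₁ ⁻¹' O' with hU
  have hUopen : IsOpen U := hO'.preimage hg₁c
  set V : Set Y := interior (closure (f₁ '' U)) with hV
  have hxV : f₁ x ∈ V := hf₁ U hUopen ⟨x, hx'O, rfl⟩
  have hsub : g₂ '' V ⊆ closure (f₂ '' O') := by
    have h3 : g₂ '' (f₁ '' U) ⊆ f₂ '' O' := by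
      rintro _ ⟨_, ⟨u, hu, rfl⟩, rfl⟩
      exact ⟨g₁ u, hu, (congrFun hcomm u).symm⟩
    calc g₂ '' V ⊆ g₂ '' closure (f₁ '' U) := Set.image_mono interior_subset
      _ ⊆ closure (g₂ '' (f₁ '' U)) := hg₂c.continuousOn.image_closure
      _ ⊆ closure (f₂ '' O') := closure_mono h3
  have := hg₂ V isOpen_interior ⟨f₁ x, hxV, rfl⟩
  have hmono : interior (closure (g₂ '' V)) ⊆ interior (closure (f₂ '' O')) :=
    interior_mono (by simpa [closure_closure] using closure_mono hsub)
  have heq : g₂ (f₁ x) = f₂ (g₁ x) := congrFun hcomm x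
  rw [← heq]
  exact hmono this
end

section
/- Let f : G → H be a continuous surjective homomorphism of paratopological groups with H Hausdorff. If f is d-open (with respect to the original topologies), then f : G_sr → H_sr between the semiregularizations is continuous. -/
/-- The semiregularization of a topology: the topology generated by the regular
open sets `interior (closure U)` for `U` open. -/
def semireg {X : Type*} (t : TopologicalSpace X) : TopologicalSpace X :=
  TopologicalSpace.generateFrom
    {s | ∃ U : Set X, t.IsOpen U ∧ s = @interior X t (@closure X t U)}

/-- If `f : G → H` is a continuous d-open surjective homomorphism of paratopological
groups with `H` Hausdorff, then `f : G_sr → H_sr` is continuous. -/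
theorem semireg_continuous_of_dopen {G H : Type*} [Group G] [Group H]
    (tG : TopologicalSpace G) (tH : TopologicalSpace H)
    (hGpara : @ContinuousMul G tG _) (hHpara : @ContinuousMul H tH _)
    (hT2 : @T2Space H tH)
    (f : G → H) (hhom : ∀ a b : G, f (a * b) = f a * f b)
    (hsurj : Function.Surjective f) (hcont : @Continuous G H tG tH f)
    (hdopen : ∀ O : Set G, tG.IsOpen O →
      f '' O ⊆ @interior H tH (@closure H tH (f '' O))) :
    @Continuous G H (semireg tG) (semireg tH) f := by
  letI := tG
  letI := tH
  rw [semireg, semireg, continuous_generateFrom_iff]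
  rintro s ⟨U, hU, rfl⟩
  -- A := interior (closure U) is regular open
  set A : Set H := interior (closure U) with hA
  have hAopen : IsOpen A := isOpen_interior
  have hAreg : interior (closure A) = A := by
    apply subset_antisymm
    · have h1 : closure A ⊆ closure U :=
        closure_minimal interior_subset isClosed_closure
      calc interior (closure A) ⊆ interior (closure U) := interior_mono h1
        _ = A := rfl
    · exact hAopen.subset_interior_closure
  -- B := f ⁻¹' A is regular open in G
  set B : Set G := f ⁻¹' A with hB
  have hBopen : IsOpen B := hAopen.preimage hcont
  have hBreg : interior (closure B) ⊆ B := by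
    intro x hx
    set O : Set G := interior (closure B) with hO
    have hOopen : IsOpen O := isOpen_interior
    have h1 : f '' O ⊆ closure A := by
      have : f '' O ⊆ f '' closure B := Set.image_mono (f := f) interior_subset
      refine this.trans ?_
      have h2 : f '' closure B ⊆ closure (f '' B) :=
        hcont.continuousOn.image_closure.trans (by
          exact closure_mono (Set.image_mono (f := f) subset_rfl))
      refine h2.trans (closure_mono ?_)
      exact Set.image_preimage_subset f A
    have h3 : closure (f '' O) ⊆ closure A :=
      closure_minimal h1 isClosed_closure
    have h4 : f x ∈ interior (closure (f '' O)) :=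
      hdopen O hOopen ⟨x, hx, rfl⟩
    have : f x ∈ A := by
      rw [← hAreg]
      exact interior_mono h3 h4
    exact this
  -- hence B is open in semireg tG
  have : interior (closure B) = B := subset_antisymm hBreg hBopen.subset_interior_closure
  exact TopologicalSpace.isOpen_generateFrom_of_mem ⟨B, hBopen, this.symm⟩
end

section
/- Let f : G → H be a continuous surjective homomorphism of paratopological groups with H Hausdorff. If f is d-open, then the induced map f : G_sr → H_sr between the semiregularizations is continuous and d-open. -/
private lemma semireg_idem {X : Type*} (t : TopologicalSpace X) (U : Set X) :
    @interior X t (@closure X t (@interior X t (@closure X t U))) =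
      @interior X t (@closure X t U) := by
  letI := t
  refine subset_antisymm (interior_mono ?_) (interior_maximal subset_closure isOpen_interior)
  calc closure (interior (closure U)) ⊆ closure (closure U) := closure_mono interior_subset
    _ = closure U := closure_closure

private lemma semireg_le {X : Type*} (t : TopologicalSpace X) : t ≤ semireg t := by
  apply le_generateFrom
  rintro s ⟨U, hU, rfl⟩
  exact @isOpen_interior X t _

/-- `t`-closure is contained in `semireg t`-closure. -/
private lemma closure_le_semireg {X : Type*} (t : TopologicalSpace X) (A : Set X) :
    @closure X t A ⊆ @closure X (semireg t) A := by
  have h1 : @IsClosed X t (@closure X (semireg t) A) := by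
    have h : (semireg t).IsOpen (@closure X (semireg t) A)ᶜ := by
      letI := semireg t
      exact isClosed_closure.isOpen_compl
    letI := t
    rw [← isOpen_compl_iff]
    exact semireg_le t _ h
  have h2 : A ⊆ @closure X (semireg t) A := by
    letI := semireg t; exact subset_closure
  letI := t
  exact closure_minimal h2 h1

/-- Every point of a `semireg t`-open set lies in a regular open subset of it. -/
private lemma semireg_basic {X : Type*} (t : TopologicalSpace X) (O : Set X)
    (hO : (semireg t).IsOpen O) :
    ∀ x ∈ O, ∃ U : Set X, t.IsOpen U ∧ x ∈ @interior X t (@closure X t U) ∧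
      @interior X t (@closure X t U) ⊆ O := by
  letI := t
  have hO' : TopologicalSpace.GenerateOpen
      {s | ∃ U : Set X, t.IsOpen U ∧ s = @interior X t (@closure X t U)} O := hO
  clear hO
  induction hO' with
  | basic s hs =>
    obtain ⟨U, hU, rfl⟩ := hs
    exact fun x hx => ⟨U, hU, hx, subset_rfl⟩
  | univ =>
    intro x _
    exact ⟨Set.univ, isOpen_univ, by simp, by simp⟩
  | inter O₁ O₂ h₁ h₂ ih₁ ih₂ =>
    rintro x ⟨hx₁, hx₂⟩
    obtain ⟨U₁, hU₁, hxU₁, hsub₁⟩ := ih₁ x hx₁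
    obtain ⟨U₂, hU₂, hxU₂, hsub₂⟩ := ih₂ x hx₂
    set B : Set X := interior (closure U₁) ∩ interior (closure U₂) with hB
    have hBopen : IsOpen B := isOpen_interior.inter isOpen_interior
    refine ⟨B, hBopen, interior_maximal subset_closure hBopen ⟨hxU₁, hxU₂⟩, ?_⟩
    have key : interior (closure B) ⊆ B := by
      intro y hy
      constructor
      · have : interior (closure B) ⊆ interior (closure (interior (closure U₁))) :=
          interior_mono (closure_mono Set.inter_subset_left)
        exact (semireg_idem t U₁) ▸ this hy
      · have : interior (closure B) ⊆ interior (closure (interior (closure U₂))) :=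
          interior_mono (closure_mono Set.inter_subset_right)
        exact (semireg_idem t U₂) ▸ this hy
    exact key.trans (Set.inter_subset_inter hsub₁ hsub₂)
  | sUnion S hS ih =>
    rintro x ⟨s, hsS, hxs⟩
    obtain ⟨U, h1, h2, h3⟩ := ih s hsS x hxs
    exact ⟨U, h1, h2, h3.trans (Set.subset_sUnion_of_mem hsS)⟩

/-- If `f : G → H` is a continuous d-open surjective homomorphism of paratopological
groups with `H` Hausdorff, then `f : G_sr → H_sr` is continuous and d-open. -/
theorem semireg_continuous_dopen_of_dopen {G H : Type*} [Group G] [Group H]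
    (tG : TopologicalSpace G) (tH : TopologicalSpace H)
    (hGpara : @ContinuousMul G tG _) (hHpara : @ContinuousMul H tH _)
    (hT2 : @T2Space H tH)
    (f : G → H) (hhom : ∀ a b : G, f (a * b) = f a * f b)
    (hsurj : Function.Surjective f) (hcont : @Continuous G H tG tH f)
    (hdopen : ∀ O : Set G, tG.IsOpen O →
      f '' O ⊆ @interior H tH (@closure H tH (f '' O))) :
    @Continuous G H (semireg tG) (semireg tH) f ∧
      ∀ O : Set G, (semireg tG).IsOpen O →
        f '' O ⊆ @interior H (semireg tH) (@closure H (semireg tH) (f '' O)) := by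
  constructor
  · -- Continuity: the preimage of each regular open generator is regular open.
    rw [show semireg tH = TopologicalSpace.generateFrom
      {s | ∃ U : Set H, tH.IsOpen U ∧ s = @interior H tH (@closure H tH U)} from rfl,
      continuous_generateFrom_iff]
    rintro s ⟨V, hV, rfl⟩
    letI := tG; letI := tH
    set W : Set H := interior (closure V) with hWdef
    have hWopen : IsOpen W := isOpen_interior
    have hWreg : interior (closure W) = W := semireg_idem tH V
    have hpre : f ⁻¹' W = interior (closure (f ⁻¹' W)) := by
      refine subset_antisymm
        (interior_maximal subset_closure (hWopen.preimage hcont)) ?_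
      have h1 : f '' interior (closure (f ⁻¹' W)) ⊆ closure W := by
        calc f '' interior (closure (f ⁻¹' W))
            ⊆ f '' closure (f ⁻¹' W) := Set.image_mono interior_subset
          _ ⊆ closure (f '' (f ⁻¹' W)) := image_closure_subset_closure_image hcont
          _ = closure W := by rw [Set.image_preimage_eq W hsurj]
      have h3 : f '' interior (closure (f ⁻¹' W)) ⊆ W := by
        refine (hdopen _ isOpen_interior).trans ?_
        calc interior (closure (f '' interior (closure (f ⁻¹' W))))
            ⊆ interior (closure (closure W)) := interior_mono (closure_mono h1)
          _ = W := by rw [closure_closure, hWreg]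
      intro x hx
      exact h3 ⟨x, hx, rfl⟩
    exact TopologicalSpace.GenerateOpen.basic _ ⟨f ⁻¹' W, hWopen.preimage hcont, hpre⟩
  · -- d-openness
    intro O hO
    rintro y ⟨x, hxO, rfl⟩
    obtain ⟨U, hU, hxU, hsub⟩ := semireg_basic tG O hO x hxO
    letI := tG; letI := tH
    set B : Set G := interior (closure U) with hBdef
    have hBopen : IsOpen B := isOpen_interior
    set W : Set H := interior (closure (f '' B)) with hWdef
    have hfB : f '' B ⊆ W := hdopen B hBopen
    -- `W` is semireg-open since it is regular open in `tH`.
    have hclW : closure W = closure (f '' B) :=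
      subset_antisymm
        (closure_minimal (interior_subset.trans subset_rfl) isClosed_closure)
        (closure_mono hfB)
    have hWsr : (semireg tH).IsOpen W :=
      TopologicalSpace.GenerateOpen.basic _
        ⟨W, isOpen_interior, by rw [hclW]⟩
    -- `W ⊆ semireg`-closure of `f '' O`
    have hWsub : W ⊆ @closure H (semireg tH) (f '' O) := by
      refine Set.Subset.trans interior_subset ?_
      refine Set.Subset.trans (closure_le_semireg tH (f '' B)) ?_
      letI := semireg tH
      exact closure_mono (Set.image_mono hsub)
    have hgoal : W ⊆ @interior H (semireg tH) (@closure H (semireg tH) (f '' O)) := by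
      letI := semireg tH
      exact interior_maximal hWsub hWsr
    exact hgoal (hfB ⟨x, hxU, rfl⟩)
end

section
/- Let f : G → H be a continuous d-open surjective homomorphism of paratopological groups. If G has property ω-QU, then H has property ω-QU. -/
/-- A paratopological group `G` has property ω-QU if every continuous real-valued
function on `G` is ω-quasi-uniformly continuous: for each `ε > 0` there is a
countable family of open neighbourhoods of the identity witnessing two-sided
quasi-uniform continuity. -/
def OmegaQU (G : Type*) [Group G] [TopologicalSpace G] : Prop :=
  ∀ k : G → ℝ, Continuous k → ∀ ε : ℝ, 0 < ε →
    ∃ V : ℕ → Set G, (∀ n, IsOpen (V n) ∧ (1 : G) ∈ V n) ∧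
      ∀ g : G, ∃ n, (∀ x ∈ V n, |k (g * x) - k g| < ε) ∧
        (∀ x ∈ V n, |k (x * g) - k g| < ε)

/-- A continuous d-open surjective homomorphism of paratopological groups preserves
property ω-QU. -/
theorem omegaQU_of_dopen_image {G H : Type*} [Group G] [Group H]
    [TopologicalSpace G] [TopologicalSpace H] [ContinuousMul G] [ContinuousMul H]
    (f : G → H) (hhom : ∀ a b : G, f (a * b) = f a * f b)
    (hsurj : Function.Surjective f) (hcont : Continuous f) (hd : DOpen f)
    (hG : OmegaQU G) : OmegaQU H := by
  intro k hk ε hε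
  obtain ⟨V, hV, hVg⟩ := hG (k ∘ f) (hk.comp hcont) (ε / 2) (by linarith)
  have h1 : f 1 = 1 := by
    have h := hhom 1 1
    rw [mul_one] at h
    exact left_eq_mul.mp h
  refine ⟨fun n => interior (closure (f '' V n)), fun n =>
    ⟨isOpen_interior, hd _ (hV n).1 ⟨1, (hV n).2, h1⟩⟩, ?_⟩
  intro h
  obtain ⟨g, rfl⟩ := hsurj h
  obtain ⟨n, hl, hr⟩ := hVg g
  refine ⟨n, ?_, ?_⟩
  · intro y hy
    have hsub : closure (f '' V n) ⊆ {y | |k (f g * y) - k (f g)| ≤ ε / 2} := by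
      apply closure_minimal
      · rintro _ ⟨x, hx, rfl⟩
        have h2 := hl x hx
        simp only [Function.comp_apply, hhom] at h2
        exact le_of_lt h2
      · exact isClosed_le (((hk.comp (continuous_mul_left _)).sub continuous_const).abs)
          continuous_const
    have := hsub (interior_subset hy)
    simp only [Set.mem_setOf_eq] at this
    linarith
  · intro y hy
    have hsub : closure (f '' V n) ⊆ {y | |k (y * f g) - k (f g)| ≤ ε / 2} := by
      apply closure_minimal
      · rintro _ ⟨x, hx, rfl⟩
        have h2 := hr x hx
        simp only [Function.comp_apply, hhom] at h2
        exact le_of_lt h2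
      · exact isClosed_le (((hk.comp (continuous_mul_right _)).sub continuous_const).abs)
          continuous_const
    have := hsub (interior_subset hy)
    simp only [Set.mem_setOf_eq] at this
    linarith
end

section
/- Every open subgroup of a paratopological group G is z-embedded in G. -/
/-- Every open subgroup of a paratopological group `G` is z-embedded in `G`. -/
theorem open_subgroup_zEmbedded {G : Type*} [Group G] [TopologicalSpace G]
    [ContinuousMul G] (H : Subgroup G) (hopen : IsOpen (H : Set G)) :
    ∀ k : H → ℝ, Continuous k →
      ∃ F : G → ℝ, Continuous F ∧
        (k ⁻¹' {0} : Set H) = Subtype.val ⁻¹' (F ⁻¹' {0}) := by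
  intro k hk
  classical
  have hclosed : IsClosed (H : Set G) := H.isClosed_of_isOpen hopen
  set F : G → ℝ := fun g => if h : g ∈ H then k ⟨g, h⟩ else 1 with hF
  have hrestr : Set.domRestrict (H : Set G) F = k := by
    funext x
    simp [hF, x.2, Set.domRestrict]
  refine ⟨F, ?_, ?_⟩
  · rw [continuous_iff_continuousAt]
    intro x
    by_cases hx : x ∈ H
    · have hcont : ContinuousOn F (H : Set G) := by
        rw [continuousOn_iff_continuous_restrict, hrestr]
        exact hk
      exact (hopen.continuousOn_iff.mp hcont) hx
    · have hmem : (H : Set G)ᶜ ∈ nhds x := hclosed.isOpen_compl.mem_nhds hx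
      have : F =ᶠ[nhds x] fun _ => 1 := by
        filter_upwards [hmem] with y hy
        exact dif_neg hy
      exact (continuousAt_const (y := (1 : ℝ))).congr this.symm
  · ext x
    simp [hF, x.2]
end
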